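/- Let V be a finite-dimensional subspace of H^s_rad(ℝⁿ) and ω ∈ ℝ. Then J(u) = ½‖(-Δ)^{s/2}u‖₂² + (ω+1)/2‖u‖₂² - ½∫u² log u² → -∞ as ‖u‖_{H^s} → ∞ with u ∈ V. In particular there exists R > 0 such that J(u) ≤ 0 for all u ∈ V with ‖u‖_{H^s} ≥ R. -/

import Mathlib

open MeasureTheory
open scoped ENNReal

/-- Gagliardo seminorm (squared) of a function on `ℝⁿ`. -/
noncomputable def gagliardo (n : ℕ) (s : ℝ) (u : (Fin n → ℝ) → ℝ) : ℝ≥0∞ :=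
  ∫⁻ p : (Fin n → ℝ) × (Fin n → ℝ),
    ENNReal.ofReal ((u p.1 - u p.2) ^ 2 / ‖p.1 - p.2‖ ^ (n + 2 * s))

/-- The squared `H^s` norm. -/
noncomputable def hsNormSq (n : ℕ) (s : ℝ) (u : (Fin n → ℝ) → ℝ) : ℝ :=
  (∫ x, (u x) ^ 2) + (gagliardo n s u).toReal

/-- The logarithmic energy functional (the Gagliardo seminorm squared playing
the role of `‖(-Δ)^{s/2}u‖₂²`). -/
noncomputable def Jfun (n : ℕ) (s ω : ℝ) (u : (Fin n → ℝ) → ℝ) : ℝ :=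
  (1 / 2) * (gagliardo n s u).toReal + (ω + 1) / 2 * (∫ x, (u x) ^ 2) -
    (1 / 2) * ∫ x, (u x) ^ 2 * Real.log ((u x) ^ 2)

lemma xlog_le {x y : ℝ} (hx : 0 ≤ x) (hxy : x ≤ y) (hy : y ≤ 1) :
    x * (-Real.log x) ≤ y * (-Real.log y) + y := by
  have hly : Real.log y ≤ 0 := by
    rcases eq_or_lt_of_le (hx.trans hxy) with h | h
    · simp [← h]
    · exact Real.log_nonpos h.le hy
  rcases eq_or_lt_of_le hx with h0 | h0
  · have hy0 : 0 ≤ y := hx.trans hxy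
    rw [← h0]
    nlinarith [mul_nonneg hy0 (neg_nonneg.2 hly)]
  · have hy0 : 0 < y := lt_of_lt_of_le h0 hxy
    have h1 : x * Real.log (y / x) ≤ y - x := by
      have h := Real.log_le_sub_one_of_pos (div_pos hy0 h0)
      have := mul_le_mul_of_nonneg_left h h0.le
      calc x * Real.log (y / x) ≤ x * (y / x - 1) := this
        _ = y - x := by field_simp
    have h2 : Real.log (y / x) = Real.log y - Real.log x :=
      Real.log_div (ne_of_gt hy0) (ne_of_gt h0)
    nlinarith [mul_le_mul_of_nonneg_left hxy (neg_nonneg.2 hly)]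

lemma sum_neglog {ι : Type*} (t : Finset ι) (x : ι → ℝ) (hx : ∀ j, 0 ≤ x j)
    (hS : ∑ j ∈ t, x j ≤ 1) :
    (∑ j ∈ t, x j) * (-Real.log (∑ j ∈ t, x j)) ≤
      ∑ j ∈ t, max (-(x j * Real.log (x j))) 0 := by
  set S := ∑ j ∈ t, x j with hSdef
  rw [Finset.sum_mul]
  refine Finset.sum_le_sum fun j hj => ?_
  rcases eq_or_lt_of_le (hx j) with h0 | h0
  · simp [← h0]
  · have hjS : x j ≤ S := Finset.single_le_sum (fun i _ => hx i) hj
    have h1 : -Real.log S ≤ -Real.log (x j) := by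
      have := Real.log_le_log h0 hjS
      linarith
    calc x j * (-Real.log S) ≤ x j * (-Real.log (x j)) :=
          mul_le_mul_of_nonneg_left h1 (hx j)
      _ = -(x j * Real.log (x j)) := by ring
      _ ≤ max (-(x j * Real.log (x j))) 0 := le_max_left _ _

lemma neglog_bound {ι : Type*} (t : Finset ι) (x : ι → ℝ) (hx : ∀ j, 0 ≤ x j)
    {A T : ℝ} (hA : 1 ≤ A) (hT : 0 ≤ T) (hle : T ≤ A * ∑ j ∈ t, x j) :
    max (-(T * Real.log T)) 0 ≤
      A * ((∑ j ∈ t, x j) + ∑ j ∈ t, max (-(x j * Real.log (x j))) 0) := by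
  set S := ∑ j ∈ t, x j with hSdef
  have hS0 : 0 ≤ S := Finset.sum_nonneg fun j _ => hx j
  have hM0 : 0 ≤ ∑ j ∈ t, max (-(x j * Real.log (x j))) 0 :=
    Finset.sum_nonneg fun j _ => le_max_right _ _
  have hRHS : 0 ≤ A * (S + ∑ j ∈ t, max (-(x j * Real.log (x j))) 0) := by positivity
  rcases le_or_gt 1 T with hT1 | hT1
  · have : 0 ≤ Real.log T := Real.log_nonneg hT1
    have : -(T * Real.log T) ≤ 0 := by nlinarith
    simpa [max_le_iff] using ⟨this.trans hRHS, hRHS⟩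
  · refine max_le ?_ hRHS
    rcases eq_or_lt_of_le hS0 with hS | hS
    · have hT0 : T = 0 := le_antisymm (by simpa [← hS] using hle) hT
      simp [hT0]; positivity
    · rcases le_or_gt 1 (A * S) with hY | hY
      · have h1 : -(T * Real.log T) = T * (-Real.log T) := by ring
        rw [h1]
        have := xlog_le hT hT1.le le_rfl
        simp only [Real.log_one, neg_zero, mul_zero, zero_add] at this
        calc T * (-Real.log T) ≤ 1 := this
          _ ≤ A * S := hY
          _ ≤ A * (S + _) := by nlinarith
      · have h1 : -(T * Real.log T) = T * (-Real.log T) := by ring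
        rw [h1]
        have key := xlog_le hT hle hY.le
        have hlogY : Real.log (A * S) = Real.log A + Real.log S :=
          Real.log_mul (by linarith) (ne_of_gt hS)
        have hlogA : 0 ≤ Real.log A := Real.log_nonneg hA
        have hS1 : S ≤ 1 := by nlinarith
        have hsub := sum_neglog t x hx hS1
        -- A*S*(-(log A + log S)) ≤ A * (S * (-log S)) ≤ A * sum
        have h2 : (A * S) * (-Real.log (A * S)) ≤ A * (S * (-Real.log S)) := by
          rw [hlogY]; nlinarith
        have h3 : A * (S * (-Real.log S)) ≤ A * ∑ j ∈ t, max (-(x j * Real.log (x j))) 0 :=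
          mul_le_mul_of_nonneg_left hsub (by linarith)
        calc T * (-Real.log T) ≤ (A * S) * (-Real.log (A * S)) + A * S := key
          _ ≤ A * ∑ j ∈ t, max (-(x j * Real.log (x j))) 0 + A * S := by linarith
          _ = A * (S + ∑ j ∈ t, max (-(x j * Real.log (x j))) 0) := by ring

lemma gag_meas {n : ℕ} {s : ℝ} (hns : 0 ≤ (n : ℝ) + 2 * s) {u : (Fin n → ℝ) → ℝ} (hu : Measurable u) :
    Measurable fun p : (Fin n → ℝ) × (Fin n → ℝ) =>
      ENNReal.ofReal ((u p.1 - u p.2) ^ 2 / ‖p.1 - p.2‖ ^ ((n : ℝ) + 2 * s)) := by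
  apply Measurable.ennreal_ofReal
  apply Measurable.div
  · exact (((hu.comp measurable_fst).sub (hu.comp measurable_snd)).pow_const 2)
  · exact (((continuous_fst.sub continuous_snd).norm.rpow_const
      (fun x => Or.inr hns)).measurable)

lemma gag_congr_ae {n : ℕ} {s : ℝ} {u v : (Fin n → ℝ) → ℝ}
    (h : u =ᵐ[volume] v) : gagliardo n s u = gagliardo n s v := by
  unfold gagliardo
  apply lintegral_congr_ae
  rw [Measure.volume_eq_prod]
  have h1 : ∀ᵐ p : (Fin n → ℝ) × (Fin n → ℝ) ∂(volume.prod volume), u p.1 = v p.1 :=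
    Measure.quasiMeasurePreserving_fst.ae h
  have h2 : ∀ᵐ p : (Fin n → ℝ) × (Fin n → ℝ) ∂(volume.prod volume), u p.2 = v p.2 :=
    Measure.quasiMeasurePreserving_snd.ae h
  filter_upwards [h1, h2] with p e1 e2
  rw [e1, e2]

lemma gag_ae_zero {n : ℕ} {s : ℝ} {u : (Fin n → ℝ) → ℝ}
    (h : u =ᵐ[volume] 0) : gagliardo n s u = 0 := by
  rw [gag_congr_ae h]
  unfold gagliardo
  simp

lemma gag_smul {n : ℕ} {s : ℝ} (c : ℝ) (u : (Fin n → ℝ) → ℝ) :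
    gagliardo n s (fun x => c * u x) = ENNReal.ofReal (c ^ 2) * gagliardo n s u := by
  unfold gagliardo
  rw [← lintegral_const_mul' _ _ ENNReal.ofReal_ne_top]
  apply lintegral_congr
  intro p
  rw [← ENNReal.ofReal_mul (by positivity)]
  congr 1
  rw [← mul_div_assoc]
  congr 1
  ring

lemma gag_sum_bound {n : ℕ} {s : ℝ} (hns : 0 ≤ (n : ℝ) + 2 * s)
    {k : ℕ} (e : Fin k → ((Fin n → ℝ) → ℝ))
    (hmeas : ∀ j, Measurable (e j)) (b : Fin k → ℝ) {B : ℝ} (hB0 : 0 ≤ B)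
    (hB : ∀ j, |b j| ≤ B) :
    gagliardo n s (fun x => ∑ j, b j * e j x) ≤
      ENNReal.ofReal (((k : ℝ) + 1) * B ^ 2) * ∑ j, gagliardo n s (e j) := by
  set C : ℝ := ((k : ℝ) + 1) * B ^ 2 with hC
  have hC0 : 0 ≤ C := by positivity
  unfold gagliardo
  have key : ∀ p : (Fin n → ℝ) × (Fin n → ℝ),
      ENNReal.ofReal (((∑ j, b j * e j p.1) - ∑ j, b j * e j p.2) ^ 2 /
          ‖p.1 - p.2‖ ^ ((n : ℝ) + 2 * s)) ≤
        ENNReal.ofReal C *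
          ∑ j, ENNReal.ofReal ((e j p.1 - e j p.2) ^ 2 / ‖p.1 - p.2‖ ^ ((n : ℝ) + 2 * s)) := by
    intro p
    set d : ℝ := ‖p.1 - p.2‖ ^ ((n : ℝ) + 2 * s) with hd
    have hd0 : 0 ≤ d := Real.rpow_nonneg (norm_nonneg _) _
    have hnum : ((∑ j, b j * e j p.1) - ∑ j, b j * e j p.2) ^ 2 ≤
        C * ∑ j, (e j p.1 - e j p.2) ^ 2 := by
      have h1 : (∑ j, b j * e j p.1) - ∑ j, b j * e j p.2
          = ∑ j, b j * (e j p.1 - e j p.2) := by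
        rw [← Finset.sum_sub_distrib]; apply Finset.sum_congr rfl; intros; ring
      rw [h1]
      have h2 := sq_sum_le_card_mul_sum_sq
        (s := (Finset.univ : Finset (Fin k))) (f := fun j => b j * (e j p.1 - e j p.2))
      have h3 : ∑ j, (b j * (e j p.1 - e j p.2)) ^ 2 ≤ B ^ 2 * ∑ j, (e j p.1 - e j p.2) ^ 2 := by
        rw [Finset.mul_sum]
        apply Finset.sum_le_sum
        intro j _
        have := sq_abs (b j)
        have hb2 : (b j) ^ 2 ≤ B ^ 2 := by
          have := hB j
          nlinarith [abs_nonneg (b j)]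
        nlinarith [sq_nonneg (e j p.1 - e j p.2)]
      have hcard : ((Finset.univ : Finset (Fin k)).card : ℝ) = (k : ℝ) := by simp
      have hsum0 : 0 ≤ ∑ j, (b j * (e j p.1 - e j p.2)) ^ 2 :=
        Finset.sum_nonneg fun j _ => sq_nonneg _
      have hsum0' : 0 ≤ ∑ j, (e j p.1 - e j p.2) ^ 2 :=
        Finset.sum_nonneg fun j _ => sq_nonneg _
      calc (∑ j, b j * (e j p.1 - e j p.2)) ^ 2
          ≤ (k : ℝ) * ∑ j, (b j * (e j p.1 - e j p.2)) ^ 2 := by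
            simpa [hcard] using h2
        _ ≤ (k : ℝ) * (B ^ 2 * ∑ j, (e j p.1 - e j p.2) ^ 2) := by
            apply mul_le_mul_of_nonneg_left h3 (Nat.cast_nonneg k)
        _ ≤ C * ∑ j, (e j p.1 - e j p.2) ^ 2 := by
            rw [hC]; nlinarith [mul_nonneg (sq_nonneg B) hsum0']
    have hdiv : ((∑ j, b j * e j p.1) - ∑ j, b j * e j p.2) ^ 2 / d ≤
        C * ∑ j, ((e j p.1 - e j p.2) ^ 2 / d) := by
      calc _ ≤ (C * ∑ j, (e j p.1 - e j p.2) ^ 2) / d :=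
            div_le_div_of_nonneg_right hnum hd0
        _ = C * ∑ j, ((e j p.1 - e j p.2) ^ 2 / d) := by
            rw [mul_div_assoc, Finset.sum_div]
    calc ENNReal.ofReal _ ≤ ENNReal.ofReal (C * ∑ j, ((e j p.1 - e j p.2) ^ 2 / d)) :=
          ENNReal.ofReal_le_ofReal hdiv
      _ = ENNReal.ofReal C * ENNReal.ofReal (∑ j, ((e j p.1 - e j p.2) ^ 2 / d)) :=
          ENNReal.ofReal_mul hC0
      _ = ENNReal.ofReal C * ∑ j, ENNReal.ofReal ((e j p.1 - e j p.2) ^ 2 / d) := by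
          rw [ENNReal.ofReal_sum_of_nonneg]
          intro j _
          positivity
  calc (∫⁻ p : (Fin n → ℝ) × (Fin n → ℝ),
        ENNReal.ofReal (((∑ j, b j * e j p.1) - ∑ j, b j * e j p.2) ^ 2 /
          ‖p.1 - p.2‖ ^ ((n : ℝ) + 2 * s)))
      ≤ ∫⁻ p : (Fin n → ℝ) × (Fin n → ℝ), ENNReal.ofReal C *
          ∑ j, ENNReal.ofReal ((e j p.1 - e j p.2) ^ 2 / ‖p.1 - p.2‖ ^ ((n : ℝ) + 2 * s)) :=
        lintegral_mono key
    _ = ENNReal.ofReal C * ∫⁻ p : (Fin n → ℝ) × (Fin n → ℝ),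
          ∑ j, ENNReal.ofReal ((e j p.1 - e j p.2) ^ 2 / ‖p.1 - p.2‖ ^ ((n : ℝ) + 2 * s)) :=
        lintegral_const_mul' _ _ ENNReal.ofReal_ne_top
    _ = ENNReal.ofReal C * ∑ j, ∫⁻ p : (Fin n → ℝ) × (Fin n → ℝ),
          ENNReal.ofReal ((e j p.1 - e j p.2) ^ 2 / ‖p.1 - p.2‖ ^ ((n : ℝ) + 2 * s)) := by
        rw [lintegral_finset_sum]
        intro j _
        exact gag_meas hns (hmeas j)

lemma sq_smul_integral {α : Type*} [MeasureSpace α] (μ : ℝ) (w : α → ℝ) :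
    ∫ x, (μ * w x) ^ 2 = μ ^ 2 * ∫ x, (w x) ^ 2 := by
  simp_rw [mul_pow]
  exact integral_const_mul _ _

lemma log_split_pt (μ t : ℝ) (hμ : μ ≠ 0) :
    (μ * t) ^ 2 * Real.log ((μ * t) ^ 2) =
      μ ^ 2 * Real.log (μ ^ 2) * t ^ 2 + μ ^ 2 * (t ^ 2 * Real.log (t ^ 2)) := by
  rcases eq_or_ne t 0 with rfl | ht
  · simp
  · rw [mul_pow, Real.log_mul (pow_ne_zero 2 hμ) (pow_ne_zero 2 ht)]
    ring

lemma log_split_int {α : Type*} [MeasureSpace α] (μ : ℝ) (hμ : μ ≠ 0) (w : α → ℝ)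
    (h2 : Integrable (fun x => (w x) ^ 2) volume)
    (hlog : Integrable (fun x => (w x) ^ 2 * Real.log ((w x) ^ 2)) volume) :
    ∫ x, (μ * w x) ^ 2 * Real.log ((μ * w x) ^ 2) =
      μ ^ 2 * Real.log (μ ^ 2) * (∫ x, (w x) ^ 2) +
        μ ^ 2 * ∫ x, (w x) ^ 2 * Real.log ((w x) ^ 2) := by
  have hpt : ∀ x, (μ * w x) ^ 2 * Real.log ((μ * w x) ^ 2) =
      μ ^ 2 * Real.log (μ ^ 2) * (w x) ^ 2 + μ ^ 2 * ((w x) ^ 2 * Real.log ((w x) ^ 2)) :=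
    fun x => log_split_pt μ (w x) hμ
  rw [show (fun x => (μ * w x) ^ 2 * Real.log ((μ * w x) ^ 2)) =
      (fun x => μ ^ 2 * Real.log (μ ^ 2) * (w x) ^ 2 +
        μ ^ 2 * ((w x) ^ 2 * Real.log ((w x) ^ 2))) from funext hpt]
  rw [integral_add (h2.const_mul _) (hlog.const_mul _), integral_const_mul, integral_const_mul]

lemma negpart_integral_bound {α : Type*} [MeasureSpace α] {k : ℕ}
    (e : Fin k → (α → ℝ)) (he2 : ∀ j, Integrable (fun x => (e j x) ^ 2) volume)
    (helog : ∀ j, Integrable (fun x => (e j x) ^ 2 * Real.log ((e j x) ^ 2)) volume)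
    (b : Fin k → ℝ) {B : ℝ} (hB0 : 0 ≤ B) (hB : ∀ j, |b j| ≤ B)
    (hwlog : Integrable
      (fun x => (∑ j, b j * e j x) ^ 2 * Real.log ((∑ j, b j * e j x) ^ 2)) volume) :
    -(∫ x, (∑ j, b j * e j x) ^ 2 * Real.log ((∑ j, b j * e j x) ^ 2)) ≤
      (((k : ℝ) + 1) * B ^ 2 + 1) *
        ((∑ j, ∫ x, (e j x) ^ 2) +
          ∑ j, ∫ x, max (-((e j x) ^ 2 * Real.log ((e j x) ^ 2))) 0) := by
  set A : ℝ := ((k : ℝ) + 1) * B ^ 2 + 1 with hA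
  have hA1 : 1 ≤ A := by
    have : 0 ≤ ((k : ℝ) + 1) * B ^ 2 := by positivity
    linarith
  have hneg : ∀ j, Integrable (fun x => max (-((e j x) ^ 2 * Real.log ((e j x) ^ 2))) 0) volume :=
    fun j => (helog j).neg.pos_part
  -- pointwise bound
  have hpt : ∀ x, -((∑ j, b j * e j x) ^ 2 * Real.log ((∑ j, b j * e j x) ^ 2)) ≤
      A * ((∑ j, (e j x) ^ 2) + ∑ j, max (-((e j x) ^ 2 * Real.log ((e j x) ^ 2))) 0) := by
    intro x
    have hle : (∑ j, b j * e j x) ^ 2 ≤ A * ∑ j, (e j x) ^ 2 := by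
      have h2 := sq_sum_le_card_mul_sum_sq
        (s := (Finset.univ : Finset (Fin k))) (f := fun j => b j * e j x)
      have hcard : (((Finset.univ : Finset (Fin k)).card : ℝ)) = (k : ℝ) := by simp
      have h3 : ∑ j, (b j * e j x) ^ 2 ≤ B ^ 2 * ∑ j, (e j x) ^ 2 := by
        rw [Finset.mul_sum]
        apply Finset.sum_le_sum
        intro j _
        have hb := hB j
        have hb2 : (b j) ^ 2 ≤ B ^ 2 := by nlinarith [abs_nonneg (b j), sq_abs (b j)]
        nlinarith [sq_nonneg (e j x)]
      have hsum0' : 0 ≤ ∑ j, (e j x) ^ 2 := Finset.sum_nonneg fun j _ => sq_nonneg _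
      calc (∑ j, b j * e j x) ^ 2 ≤ (k : ℝ) * ∑ j, (b j * e j x) ^ 2 := by
            simpa [hcard] using h2
        _ ≤ (k : ℝ) * (B ^ 2 * ∑ j, (e j x) ^ 2) :=
            mul_le_mul_of_nonneg_left h3 (Nat.cast_nonneg k)
        _ ≤ A * ∑ j, (e j x) ^ 2 := by rw [hA]; nlinarith
    calc -((∑ j, b j * e j x) ^ 2 * Real.log ((∑ j, b j * e j x) ^ 2))
        ≤ max (-((∑ j, b j * e j x) ^ 2 * Real.log ((∑ j, b j * e j x) ^ 2))) 0 :=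
          le_max_left _ _
      _ ≤ A * ((∑ j, (e j x) ^ 2) + ∑ j, max (-((e j x) ^ 2 * Real.log ((e j x) ^ 2))) 0) :=
          neglog_bound Finset.univ (fun j => (e j x) ^ 2) (fun j => sq_nonneg _)
            hA1 (sq_nonneg _) hle
  -- integrate
  have hGint : Integrable (fun x =>
      A * ((∑ j, (e j x) ^ 2) + ∑ j, max (-((e j x) ^ 2 * Real.log ((e j x) ^ 2))) 0)) volume := by
    apply Integrable.const_mul
    apply Integrable.add
    · exact integrable_finset_sum _ (fun j _ => he2 j)
    · exact integrable_finset_sum _ (fun j _ => hneg j)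
  have := integral_mono hwlog.neg hGint (fun x => by
    simpa using hpt x)
  simp only [Pi.neg_apply] at this
  rw [integral_neg] at this
  calc -(∫ x, (∑ j, b j * e j x) ^ 2 * Real.log ((∑ j, b j * e j x) ^ 2))
      ≤ ∫ x, A * ((∑ j, (e j x) ^ 2) +
          ∑ j, max (-((e j x) ^ 2 * Real.log ((e j x) ^ 2))) 0) := this
    _ = A * ((∑ j, ∫ x, (e j x) ^ 2) +
          ∑ j, ∫ x, max (-((e j x) ^ 2 * Real.log ((e j x) ^ 2))) 0) := by
        rw [integral_const_mul, integral_add (integrable_finset_sum _ (fun j _ => he2 j))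
          (integrable_finset_sum _ (fun j _ => hneg j)),
          integral_finset_sum _ (fun j _ => he2 j), integral_finset_sum _ (fun j _ => hneg j)]

set_option synthInstance.maxHeartbeats 1000000 in
set_option maxHeartbeats 1000000 in
lemma exists_bounded_coords {E V : Type*} [NormedAddCommGroup E] [NormedSpace ℝ E]
    [AddCommGroup V] [Module ℝ V] [FiniteDimensional ℝ V] (T : V →ₗ[ℝ] E) :
    ∃ (k : ℕ) (v : Fin k → V) (B : ℝ), 1 ≤ B ∧
      ∀ x : V, ∃ b : Fin k → ℝ, (∀ j, |b j| ≤ B * ‖T x‖) ∧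
        T (∑ j, b j • v j) = T x := by
  set W := LinearMap.range T with hW
  set k := Module.finrank ℝ W with hk
  set g : Module.Basis (Fin k) ℝ W := Module.finBasis ℝ W with hg
  have hgj : ∀ j : Fin k, ∃ uj : V, T uj = (g j : E) := fun j => (g j).2
  choose v hv using hgj
  set L : Fin k → (W →L[ℝ] ℝ) := fun j => LinearMap.toContinuousLinearMap (g.coord j) with hL
  have hsum0 : 0 ≤ ∑ j, ‖L j‖ := Finset.sum_nonneg fun j _ => (L j).opNorm_nonneg
  refine ⟨k, v, 1 + ∑ j, ‖L j‖, by linarith, ?_⟩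
  intro x
  set f : W := ⟨T x, LinearMap.mem_range_self T x⟩ with hf
  have hnf : ‖f‖ = ‖T x‖ := rfl
  refine ⟨fun j => g.repr f j, ?_, ?_⟩
  · intro j
    have h1 : |g.repr f j| = ‖L j f‖ := by
      simp [hL, Real.norm_eq_abs, Module.Basis.coord_apply]
    have h2 : ‖L j f‖ ≤ ‖L j‖ * ‖f‖ := (L j).le_opNorm f
    have h3 : ‖L j‖ ≤ ∑ i, ‖L i‖ :=
      Finset.single_le_sum (fun i _ => (L i).opNorm_nonneg) (Finset.mem_univ j)
    have h5 : 0 ≤ ‖T x‖ := norm_nonneg _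
    rw [h1]
    nlinarith [(L j).opNorm_nonneg]
  · rw [map_sum]
    simp_rw [_root_.map_smul, hv]
    calc ∑ j, g.repr f j • ((g j : W) : E)
        = ((∑ j, g.repr f j • g j : W) : E) := by rw [Submodule.coe_sum]; simp
      _ = (f : E) := by rw [g.sum_repr]
      _ = T x := rfl

set_option maxHeartbeats 2000000 in
set_option synthInstance.maxHeartbeats 1000000 in
theorem stmt_13 (n : ℕ) (s ω : ℝ) (hs : 0 < s) (hs1 : s < 1) (hn : 2 * s < n)
    (V : Submodule ℝ ((Fin n → ℝ) → ℝ)) [FiniteDimensional ℝ V]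
    (hVmeas : ∀ u ∈ V, Measurable u)
    (hVrad : ∀ u ∈ V, ∀ x y : Fin n → ℝ, ‖x‖ = ‖y‖ → u x = u y)
    (hVHs : ∀ u ∈ V, MemLp u 2 volume ∧ gagliardo n s u < ⊤)
    (hVlog : ∀ u ∈ V, Integrable (fun x => (u x) ^ 2 * Real.log ((u x) ^ 2)) volume) :
    (∀ M : ℝ, ∃ R > 0, ∀ u ∈ V, R ≤ Real.sqrt (hsNormSq n s u) → Jfun n s ω u ≤ M) ∧
    ∃ R > 0, ∀ u ∈ V, R ≤ Real.sqrt (hsNormSq n s u) → Jfun n s ω u ≤ 0 := by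
  have hns : 0 ≤ (n : ℝ) + 2 * s := by positivity
  suffices h : ∀ M : ℝ, ∃ R > 0, ∀ u ∈ V, R ≤ Real.sqrt (hsNormSq n s u) → Jfun n s ω u ≤ M by
    exact ⟨h, h 0⟩
  -- The linear map to L²
  let T : V →ₗ[ℝ] Lp ℝ 2 (volume : Measure (Fin n → ℝ)) :=
    { toFun := fun u => MemLp.toLp (u : (Fin n → ℝ) → ℝ) (hVHs u u.2).1
      map_add' := fun u v => by
        simpa using MemLp.toLp_add (hVHs u u.2).1 (hVHs v v.2).1
      map_smul' := fun c u => by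
        simpa using MemLp.toLp_const_smul c (hVHs u u.2).1 }
  obtain ⟨k, vch, B, hB1, hcoords⟩ := exists_bounded_coords T
  let ee : Fin k → ((Fin n → ℝ) → ℝ) := fun j => (vch j : (Fin n → ℝ) → ℝ)
  have heV : ∀ j, ee j ∈ V := fun j => (vch j).2
  have hB0 : 0 ≤ B := by linarith
  -- constants
  set A2 : ℝ := ((k : ℝ) + 1) * B ^ 2 with hA2
  have hA20 : 0 ≤ A2 := by positivity
  have hgagfin : ∀ j, gagliardo n s (ee j) < ⊤ := fun j => (hVHs (ee j) (heV j)).2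
  have hSgfin : (∑ j, gagliardo n s (ee j)) ≠ ⊤ :=
    ENNReal.sum_ne_top.2 fun j _ => (hgagfin j).ne
  set Kg : ℝ := (ENNReal.ofReal A2 * ∑ j, gagliardo n s (ee j)).toReal with hKg
  have hKg0 : 0 ≤ Kg := ENNReal.toReal_nonneg
  set KL : ℝ := (A2 + 1) *
    ((∑ j, ∫ x, (ee j x) ^ 2) +
      ∑ j, ∫ x, max (-((ee j x) ^ 2 * Real.log ((ee j x) ^ 2))) 0) with hKL
  set C : ℝ := Kg + ω + 1 + KL with hC
  intro M
  set D : ℝ := Real.exp (C + 1) + 2 * |M| + 1 with hD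
  have hDpos : 0 < D := by positivity
  have hRpos : 0 < Real.sqrt ((1 + Kg) * D) := Real.sqrt_pos.2 (by positivity)
  refine ⟨Real.sqrt ((1 + Kg) * D), hRpos, ?_⟩
  intro u huV hR
  have hu2 : MemLp u 2 (volume : Measure (Fin n → ℝ)) := (hVHs u huV).1
  have hufin : gagliardo n s u < ⊤ := (hVHs u huV).2
  have hint2 : Integrable (fun x => (u x) ^ 2) volume := hu2.integrable_sq
  have hν0 : 0 ≤ ∫ x, (u x) ^ 2 := integral_nonneg fun x => sq_nonneg _
  rcases hν0.eq_or_lt with hν | hν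
  · -- degenerate case : u = 0 a.e.
    exfalso
    have huae : u =ᵐ[volume] 0 := by
      have h := (integral_eq_zero_iff_of_nonneg_ae
        (Filter.Eventually.of_forall fun x => sq_nonneg (u x)) hint2).1 hν.symm
      filter_upwards [h] with x hx
      have hx' : u x ^ 2 = 0 := by simpa using hx
      simpa using sq_eq_zero_iff.1 hx'
    have h0 : hsNormSq n s u = 0 := by
      unfold hsNormSq
      rw [gag_ae_zero huae, ← hν]
      simp
    rw [h0, Real.sqrt_zero] at hR
    linarith
  · -- main case
    set ν : ℝ := ∫ x, (u x) ^ 2 with hνdef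
    set μ : ℝ := Real.sqrt ν with hμ
    have hμpos : 0 < μ := Real.sqrt_pos.2 hν
    have hμne : μ ≠ 0 := hμpos.ne'
    have hμsq : μ ^ 2 = ν := Real.sq_sqrt hν0
    set uV : V := ⟨u, huV⟩ with huVdef
    set wV' : V := μ⁻¹ • uV with hwV'def
    have hw'eq : ((wV' : V) : (Fin n → ℝ) → ℝ) = fun x => μ⁻¹ * u x := by
      funext x; simp [hwV'def, huVdef]
    have hw'sq : ∫ x, (((wV' : V) : (Fin n → ℝ) → ℝ) x) ^ 2 = 1 := by
      rw [hw'eq, sq_smul_integral μ⁻¹ u, ← hνdef, ← hμsq]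
      field_simp
    -- norm of T wV' is 1
    have hnormT : ‖T wV'‖ = 1 := by
      have hmem : MemLp (((wV' : V) : (Fin n → ℝ) → ℝ)) 2 volume := (hVHs _ wV'.2).1
      have hcoe : (T wV' : (Fin n → ℝ) → ℝ) =ᵐ[volume] ((wV' : V) : (Fin n → ℝ) → ℝ) :=
        MemLp.coeFn_toLp hmem
      have hinner : (inner ℝ (T wV') (T wV') : ℝ) = ∫ x, (T wV' : (Fin n → ℝ) → ℝ) x *
          (T wV' : (Fin n → ℝ) → ℝ) x := by
        rw [L2.inner_def]
        simp [RCLike.inner_apply]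
        simp only [sq]
      have h2 : ∫ x, (T wV' : (Fin n → ℝ) → ℝ) x * (T wV' : (Fin n → ℝ) → ℝ) x =
          ∫ x, (((wV' : V) : (Fin n → ℝ) → ℝ) x) ^ 2 := by
        apply integral_congr_ae
        filter_upwards [hcoe] with x hx
        rw [hx]; ring
      have h4 : ‖T wV'‖ ^ 2 = 1 := by
        rw [← real_inner_self_eq_norm_sq, hinner, h2, hw'sq]
      nlinarith [norm_nonneg (T wV')]
    -- coordinates
    obtain ⟨b, hBb', hTsum⟩ := hcoords wV'
    have hBb : ∀ j, |b j| ≤ B := by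
      intro j
      have := hBb' j
      rw [hnormT, mul_one] at this
      exact this
    -- the function w
    set w : (Fin n → ℝ) → ℝ := fun x => ∑ j, b j * ee j x with hw
    set wV : V := ∑ j, b j • vch j with hwVdef
    have hwfun : ((wV : V) : (Fin n → ℝ) → ℝ) = w := by
      funext x
      rw [hwVdef, hw]
      rw [Submodule.coe_sum]
      simp [ee]
    have hwV : w ∈ V := hwfun ▸ wV.2
    -- w =ᵐ w' hence u =ᵐ μ • w
    have hww' : w =ᵐ[volume] fun x => μ⁻¹ * u x := by
      have h1 : T wV = T wV' := hTsum
      have h2 : MemLp.toLp (((wV : V) : (Fin n → ℝ) → ℝ)) (hVHs _ wV.2).1 =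
          MemLp.toLp (((wV' : V) : (Fin n → ℝ) → ℝ)) (hVHs _ wV'.2).1 := h1
      rw [MemLp.toLp_eq_toLp_iff] at h2
      calc w =ᵐ[volume] ((wV : V) : (Fin n → ℝ) → ℝ) := by rw [hwfun]
        _ =ᵐ[volume] ((wV' : V) : (Fin n → ℝ) → ℝ) := h2
        _ =ᵐ[volume] fun x => μ⁻¹ * u x := by rw [hw'eq]
    have huw : u =ᵐ[volume] fun x => μ * w x := by
      filter_upwards [hww'] with x hx
      rw [hx]
      field_simp
    -- integral identities
    have hw2int : Integrable (fun x => (w x) ^ 2) volume := (hVHs w hwV).1.integrable_sq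
    have hwlogint : Integrable (fun x => (w x) ^ 2 * Real.log ((w x) ^ 2)) volume :=
      hVlog w hwV
    have hwsq1 : ∫ x, (w x) ^ 2 = 1 := by
      have h : ∫ x, (w x) ^ 2 = ∫ x, (((wV' : V) : (Fin n → ℝ) → ℝ) x) ^ 2 := by
        apply integral_congr_ae
        filter_upwards [hww'] with x hx
        rw [hx, hw'eq]
      rw [h, hw'sq]
    -- gagliardo identities
    have hgagu : (gagliardo n s u).toReal = μ ^ 2 * (gagliardo n s w).toReal := by
      rw [gag_congr_ae huw, gag_smul μ w, ENNReal.toReal_mul, ENNReal.toReal_ofReal (sq_nonneg μ)]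
    have hgw_le : (gagliardo n s w).toReal ≤ Kg := by
      rw [hKg]
      apply ENNReal.toReal_mono
      · exact ENNReal.mul_ne_top ENNReal.ofReal_ne_top hSgfin
      · have h := gag_sum_bound hns ee (fun j => hVmeas (ee j) (heV j)) b hB0 hBb
        rw [← hA2] at h
        exact h
    -- log identity
    have hlogid : ∫ x, (u x) ^ 2 * Real.log ((u x) ^ 2) =
        μ ^ 2 * Real.log (μ ^ 2) + μ ^ 2 * ∫ x, (w x) ^ 2 * Real.log ((w x) ^ 2) := by
      have h1 : ∫ x, (u x) ^ 2 * Real.log ((u x) ^ 2) =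
          ∫ x, (μ * w x) ^ 2 * Real.log ((μ * w x) ^ 2) := by
        apply integral_congr_ae
        filter_upwards [huw] with x hx
        rw [hx]
      rw [h1, log_split_int μ hμne w hw2int hwlogint, hwsq1]
      ring
    -- negative part bound
    have hLbound : -(∫ x, (w x) ^ 2 * Real.log ((w x) ^ 2)) ≤ KL := by
      have hwl : Integrable (fun x => (∑ j, b j * ee j x) ^ 2 *
          Real.log ((∑ j, b j * ee j x) ^ 2)) volume := by
        simpa only [hw] using hwlogint
      have h := negpart_integral_bound ee
        (fun j => (hVHs (ee j) (heV j)).1.integrable_sq)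
        (fun j => hVlog (ee j) (heV j)) b hB0 hBb hwl
      rw [hKL, hA2]
      simp only [hw]
      exact h
    -- hsNormSq lower bound on μ
    have hhs : hsNormSq n s u = μ ^ 2 * (1 + (gagliardo n s w).toReal) := by
      unfold hsNormSq
      rw [hgagu, ← hνdef, ← hμsq]
      ring
    have hhs_nonneg : 0 ≤ hsNormSq n s u := by
      rw [hhs]
      have := ENNReal.toReal_nonneg (a := gagliardo n s w)
      positivity
    have hRsq : (1 + Kg) * D ≤ hsNormSq n s u := by
      have h1 : Real.sqrt ((1 + Kg) * D) ^ 2 ≤ Real.sqrt (hsNormSq n s u) ^ 2 :=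
        pow_le_pow_left₀ (Real.sqrt_nonneg _) hR 2
      rwa [Real.sq_sqrt (by positivity), Real.sq_sqrt hhs_nonneg] at h1
    have hμD : D ≤ μ ^ 2 := by
      have h2 : hsNormSq n s u ≤ μ ^ 2 * (1 + Kg) := by
        rw [hhs]
        apply mul_le_mul_of_nonneg_left _ (sq_nonneg μ)
        linarith
      have h3 : (1 + Kg) * D ≤ μ ^ 2 * (1 + Kg) := le_trans hRsq h2
      have h4 : 0 < 1 + Kg := by linarith
      nlinarith
    -- conclude
    have hlogD : C + 1 ≤ Real.log (μ ^ 2) := by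
      have h1 : Real.exp (C + 1) ≤ μ ^ 2 := by
        have h : Real.exp (C + 1) ≤ D := by
          rw [hD]; nlinarith [abs_nonneg M]
        linarith
      calc C + 1 = Real.log (Real.exp (C + 1)) := (Real.log_exp _).symm
        _ ≤ Real.log (μ ^ 2) := Real.log_le_log (Real.exp_pos _) h1
    have hJ : Jfun n s ω u = μ ^ 2 / 2 *
        ((gagliardo n s w).toReal + (ω + 1) - Real.log (μ ^ 2) -
          ∫ x, (w x) ^ 2 * Real.log ((w x) ^ 2)) := by
      unfold Jfun
      rw [hgagu, ← hνdef, ← hμsq, hlogid]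
      ring
    have hfactor : (gagliardo n s w).toReal + (ω + 1) - Real.log (μ ^ 2) -
        (∫ x, (w x) ^ 2 * Real.log ((w x) ^ 2)) ≤ -1 := by
      rw [hC] at hlogD
      linarith
    calc Jfun n s ω u ≤ μ ^ 2 / 2 * (-1) := by
          rw [hJ]
          apply mul_le_mul_of_nonneg_left hfactor (by positivity)
      _ ≤ M := by nlinarith [abs_nonneg M, neg_abs_le M, Real.exp_pos (C + 1)]
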